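/- Let Φ : ℝ → ℂ^{N_g × N} and P : ℝ → ℂ^{N_g × N_g} be three times differentiable, and assume for all t: P(t) Φ(t) = Φ(t) and P(t) Φ'(t) = 0. Then for all t: Φ'(t) = P'(t) Φ(t); Φ''(t) = (P''(t) + P'(t)²) Φ(t); and Φ'''(t) = (P'''(t) + 2 P''(t) P'(t) + P'(t) P''(t) + P'(t)³) Φ(t). -/

import Mathlib

open Matrix
open scoped Matrix.Norms.L2Operator

@[reducible]
noncomputable def matRealNormedSpace {m n : ℕ} : NormedSpace ℝ (Matrix (Fin m) (Fin n) ℂ) :=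
  { (Matrix.module : Module ℝ (Matrix (Fin m) (Fin n) ℂ)) with
    norm_smul_le := fun r x => by
      have h : r • x = (r : ℂ) • x := by ext i j; simp [Complex.real_smul]
      rw [h]
      simpa [Complex.norm_real] using norm_smul_le (r : ℂ) x }

section
attribute [local instance] matRealNormedSpace

noncomputable def mulCLM (m n p : ℕ) :
    Matrix (Fin m) (Fin n) ℂ →L[ℝ] Matrix (Fin n) (Fin p) ℂ →L[ℝ] Matrix (Fin m) (Fin p) ℂ :=
  LinearMap.mkContinuous₂
    (LinearMap.mk₂ ℝ (· * ·) Matrix.add_mul (fun c A B => Matrix.smul_mul c A B)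
      Matrix.mul_add (fun c A B => Matrix.mul_smul A c B)) 1
    (fun A B => by rw [one_mul]; exact Matrix.l2_opNorm_mul A B)

lemma mulCLM_apply {m n p : ℕ} (A : Matrix (Fin m) (Fin n) ℂ) (B : Matrix (Fin n) (Fin p) ℂ) :
    mulCLM m n p A B = A * B := rfl

lemma HasDerivAt.matmul {m n p : ℕ} {A : ℝ → Matrix (Fin m) (Fin n) ℂ}
    {B : ℝ → Matrix (Fin n) (Fin p) ℂ} {A' : Matrix (Fin m) (Fin n) ℂ}
    {B' : Matrix (Fin n) (Fin p) ℂ} {t : ℝ}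
    (hA : HasDerivAt A A' t) (hB : HasDerivAt B B' t) :
    HasDerivAt (fun t => A t * B t) (A' * B t + A t * B') t := by
  have h : HasFDerivAt (𝕜 := ℝ) (mulCLM m n p) (mulCLM m n p) (A t) :=
    ContinuousLinearMap.hasFDerivAt _
  have h1 : HasDerivAt (fun s => mulCLM m n p (A s)) (mulCLM m n p A') t :=
    h.comp_hasDerivAt t hA
  simpa [mulCLM_apply] using h1.clm_apply hB

end

theorem pt_wavefunction_derivatives
    (Ng N : ℕ)
    (Φ : ℝ → Matrix (Fin Ng) (Fin N) ℂ)
    (P : ℝ → Matrix (Fin Ng) (Fin Ng) ℂ)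
    (hΦ : Differentiable ℝ Φ) (hΦ' : Differentiable ℝ (deriv Φ))
    (hΦ'' : Differentiable ℝ (deriv (deriv Φ)))
    (hP : Differentiable ℝ P) (hP' : Differentiable ℝ (deriv P))
    (hP'' : Differentiable ℝ (deriv (deriv P)))
    (hrange : ∀ t, P t * Φ t = Φ t)
    (hpt : ∀ t, P t * deriv Φ t = 0) :
    ∀ t, deriv Φ t = deriv P t * Φ t ∧
      deriv (deriv Φ) t = (deriv (deriv P) t + deriv P t ^ 2) * Φ t ∧
      deriv (deriv (deriv Φ)) t =
        (deriv (deriv (deriv P)) t + 2 * (deriv (deriv P) t * deriv P t)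
          + deriv P t * deriv (deriv P) t + deriv P t ^ 3) * Φ t := by
  -- first derivative
  have h1 : ∀ t, deriv Φ t = deriv P t * Φ t := by
    intro t
    have hd : HasDerivAt (fun t => P t * Φ t)
        (deriv P t * Φ t + P t * deriv Φ t) t :=
      (hP t).hasDerivAt.matmul (hΦ t).hasDerivAt
    have hd' : HasDerivAt Φ (deriv P t * Φ t + P t * deriv Φ t) t := by
      simpa [funext hrange] using hd
    rw [hd'.deriv, hpt t, add_zero]
  have h1f : deriv Φ = fun t => deriv P t * Φ t := funext h1
  -- second derivative
  have h2 : ∀ t, deriv (deriv Φ) t = (deriv (deriv P) t + deriv P t ^ 2) * Φ t := by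
    intro t
    have hd : HasDerivAt (fun t => deriv P t * Φ t)
        (deriv (deriv P) t * Φ t + deriv P t * deriv Φ t) t :=
      (hP' t).hasDerivAt.matmul (hΦ t).hasDerivAt
    rw [h1 t] at hd
    rw [← h1f] at hd
    rw [hd.deriv]
    rw [Matrix.add_mul, sq, Matrix.mul_assoc]
  have h2f : deriv (deriv Φ) = fun t => (deriv (deriv P) t + deriv P t ^ 2) * Φ t :=
    funext h2
  -- third derivative
  intro t
  refine ⟨h1 t, h2 t, ?_⟩
  have hsum : HasDerivAt (fun t => deriv (deriv P) t + deriv P t ^ 2)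
      (deriv (deriv (deriv P)) t + (deriv (deriv P) t * deriv P t
        + deriv P t * deriv (deriv P) t)) t := by
    have hsq : HasDerivAt (fun t => deriv P t ^ 2)
        (deriv (deriv P) t * deriv P t + deriv P t * deriv (deriv P) t) t := by
      have := (hP' t).hasDerivAt.matmul (hP' t).hasDerivAt
      simpa [sq] using this
    exact (hP'' t).hasDerivAt.add hsq
  have hd : HasDerivAt (fun t => (deriv (deriv P) t + deriv P t ^ 2) * Φ t)
      ((deriv (deriv (deriv P)) t + (deriv (deriv P) t * deriv P t
        + deriv P t * deriv (deriv P) t)) * Φ t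
        + (deriv (deriv P) t + deriv P t ^ 2) * deriv Φ t) t := by
    exact HasDerivAt.matmul hsum (hΦ t).hasDerivAt
  rw [h1 t] at hd
  rw [← h2f] at hd
  rw [hd.deriv]
  simp only [Matrix.add_mul, Matrix.mul_add, two_mul, pow_succ, pow_zero, one_mul, Matrix.mul_assoc]
  abel
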